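/- The mutual-visibility number of the d-dimensional butterfly equals μ(BF(d)) = 2^{d+1} - 2, for all d ≥ 2. -/

import Mathlib

open SimpleGraph

/-- Two vertices are `X`-visible in `G`: some shortest path between them has
no internal vertex in `X`. -/
def IsVisiblePair {V : Type*} (G : SimpleGraph V) (X : Set V) (x y : V) : Prop :=
  ∃ p : G.Walk x y, p.IsPath ∧ p.length = G.dist x y ∧
    ∀ z ∈ p.support, z ∈ X → z = x ∨ z = y

/-- `X` is a mutual-visibility set of `G`. -/
def MutualVisSet {V : Type*} (G : SimpleGraph V) (X : Set V) : Prop :=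
  ∀ x ∈ X, ∀ y ∈ X, IsVisiblePair G X x y

/-- `X` is a total mutual-visibility set of `G`. -/
def TotalMutualVisSet {V : Type*} (G : SimpleGraph V) (X : Set V) : Prop :=
  ∀ x y : V, IsVisiblePair G X x y

/-- The mutual-visibility number `μ(G)`. -/
noncomputable def mutualVisNum {V : Type*} (G : SimpleGraph V) : ℕ :=
  sSup {n | ∃ X : Set V, MutualVisSet G X ∧ X.ncard = n}

/-- The total mutual-visibility number `μₜ(G)`. -/
noncomputable def totalMutualVisNum {V : Type*} (G : SimpleGraph V) : ℕ :=
  sSup {n | ∃ X : Set V, TotalMutualVisSet G X ∧ X.ncard = n}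

/-- A set of vertices is convex: every shortest path in `G` between two of its
vertices has all its vertices in the set. -/
def ConvexSet {V : Type*} (G : SimpleGraph V) (S : Set V) : Prop :=
  ∀ x ∈ S, ∀ y ∈ S, ∀ p : G.Walk x y, p.IsPath → p.length = G.dist x y →
    ∀ z ∈ p.support, z ∈ S

/-- The butterfly graph `BF(d)`: vertices `[ℓ, c]` with level `ℓ : Fin (d+1)`
and column `c : Fin d → Bool`; `[ℓ,c]` and `[ℓ+1,c']` are adjacent iff `c` and
`c'` agree on every bit other than bit `ℓ` (so `c = c'` or they differ exactly
in bit `ℓ`). -/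
def BF (d : ℕ) : SimpleGraph (Fin (d + 1) × (Fin d → Bool)) :=
  SimpleGraph.fromRel (fun u v =>
    (u.1 : ℕ) + 1 = (v.1 : ℕ) ∧ ∀ i : Fin d, (i : ℕ) ≠ (u.1 : ℕ) → u.2 i = v.2 i)

namespace BFP
open Finset SimpleGraph

variable {d : ℕ}

abbrev V (d : ℕ) := Fin (d + 1) × (Fin d → Bool)

lemma adj_iff {u v : V d} : (BF d).Adj u v ↔ u ≠ v ∧
    (((u.1:ℕ)+1 = (v.1:ℕ) ∧ ∀ i : Fin d, (i:ℕ) ≠ (u.1:ℕ) → u.2 i = v.2 i) ∨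
     ((v.1:ℕ)+1 = (u.1:ℕ) ∧ ∀ i : Fin d, (i:ℕ) ≠ (v.1:ℕ) → v.2 i = u.2 i)) := by
  rw [BF, fromRel_adj]

lemma adj_level {u v : V d} (h : (BF d).Adj u v) :
    (u.1:ℕ)+1 = (v.1:ℕ) ∨ (v.1:ℕ)+1 = (u.1:ℕ) := by
  rcases (adj_iff.mp h).2 with h1 | h1
  · exact Or.inl h1.1
  · exact Or.inr h1.1

lemma adj_down {u v : V d} (h : (BF d).Adj u v) (hl : (u.1:ℕ)+1 = (v.1:ℕ)) :
    ∀ i : Fin d, (i:ℕ) ≠ (u.1:ℕ) → u.2 i = v.2 i := by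
  rcases (adj_iff.mp h).2 with h1 | h1
  · exact h1.2
  · omega

lemma length_ge_sub {u v : V d} (p : (BF d).Walk u v) :
    (v.1:ℕ) - (u.1:ℕ) ≤ p.length := by
  induction p with
  | nil => simp
  | @cons a b c h q ih =>
    rcases adj_level h with h1 | h1 <;> (simp only [Walk.length_cons]; omega)

lemma length_ge_sub' {u v : V d} (p : (BF d).Walk u v) :
    (u.1:ℕ) - (v.1:ℕ) ≤ p.length := by
  simpa using length_ge_sub p.reverse

lemma bit_const {u v : V d} (p : (BF d).Walk u v) (j : Fin d)
    (hj : ∀ w ∈ p.support, (w.1:ℕ) ≤ (j:ℕ)) : u.2 j = v.2 j := by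
  induction p with
  | nil => rfl
  | @cons a b c h q ih =>
    have ha : (a.1:ℕ) ≤ (j:ℕ) := hj a (by simp)
    have hb : (b.1:ℕ) ≤ (j:ℕ) := hj b (by simp)
    have hab : a.2 j = b.2 j := by
      rcases adj_level h with h1 | h1
      · exact adj_down h h1 j (by omega)
      · exact (adj_down ((BF d).adj_symm h) h1 j (by omega)).symm
    rw [hab]
    exact ih (fun w hw => hj w (by simp [hw]))

lemma exists_big_level {u v : V d} (p : (BF d).Walk u v) (j : Fin d)
    (hbit : u.2 j ≠ v.2 j) : ∃ w ∈ p.support, (j:ℕ) < (w.1:ℕ) := by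
  by_contra hc
  push_neg at hc
  exact hbit (bit_const p j hc)

lemma exists_level {u v : V d} (p : (BF d).Walk u v) : ∀ (m : ℕ),
    (u.1:ℕ) ≤ m → m ≤ (v.1:ℕ) → ∃ w ∈ p.support, (w.1:ℕ) = m := by
  induction p with
  | nil =>
    intro m h1 h2
    exact ⟨_, Walk.start_mem_support _, by omega⟩
  | @cons a b c h q ih =>
    intro m h1 h2
    rcases eq_or_lt_of_le h1 with he | hlt
    · exact ⟨a, by simp, he⟩
    · have hb : (b.1:ℕ) ≤ m := by rcases adj_level h with h1 | h1 <;> omega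
      obtain ⟨w, hw, hwm⟩ := ih m hb h2
      exact ⟨w, by simp [hw], hwm⟩

/-- Existence of the monotone "descending" walk between aligned vertices. -/
lemma exists_desc {n : ℕ} : ∀ (u v : V d), (v.1:ℕ) = (u.1:ℕ) + n →
    (∀ t : Fin d, ((t:ℕ) < (u.1:ℕ) ∨ (v.1:ℕ) ≤ (t:ℕ)) → u.2 t = v.2 t) →
    ∃ p : (BF d).Walk u v, p.length = n ∧
      ∀ w ∈ p.support, (u.1:ℕ) ≤ (w.1:ℕ) ∧ (w.1:ℕ) ≤ (v.1:ℕ) ∧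
        ∀ t : Fin d, w.2 t = if (t:ℕ) < (w.1:ℕ) then v.2 t else u.2 t := by
  induction n with
  | zero =>
    intro u v hlv hagree
    have huv : u = v := by
      have h1 : u.1 = v.1 := by apply Fin.ext; omega
      have h2 : u.2 = v.2 := by
        funext t
        exact hagree t (by omega)
      exact Prod.ext h1 h2
    subst huv
    refine ⟨Walk.nil, rfl, ?_⟩
    intro w hw
    simp only [Walk.support_nil, List.mem_singleton] at hw
    subst hw
    refine ⟨le_refl _, le_refl _, ?_⟩
    intro t
    split <;> rename_i ht
    · exact hagree t (Or.inl ht)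
    · rfl
  | succ n ih =>
    intro u v hlv hagree
    have hud : (u.1:ℕ) + 1 ≤ d := by have := v.1.isLt; omega
    set u' : V d := (⟨(u.1:ℕ)+1, by omega⟩,
      fun t => if (t:ℕ) < (u.1:ℕ)+1 then v.2 t else u.2 t) with hu'
    have hadj : (BF d).Adj u u' := by
      rw [adj_iff]
      constructor
      · intro hEq
        have : (u.1:ℕ) = (u'.1:ℕ) := by rw [hEq]
        simp [hu'] at this
      · left
        refine ⟨by simp [hu'], ?_⟩
        intro i hi
        simp only [hu']
        split <;> rename_i hil
        · exact hagree i (Or.inl (by omega))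
        · rfl
    have hagree' : ∀ t : Fin d, ((t:ℕ) < (u'.1:ℕ) ∨ (v.1:ℕ) ≤ (t:ℕ)) → u'.2 t = v.2 t := by
      intro t ht
      have ht' : ((t:ℕ) < (u.1:ℕ)+1 ∨ (v.1:ℕ) ≤ (t:ℕ)) := by simpa [hu'] using ht
      show (if (t:ℕ) < (u.1:ℕ)+1 then v.2 t else u.2 t) = v.2 t
      split <;> rename_i htl
      · rfl
      · exact hagree t (by omega)
    obtain ⟨q, hql, hqs⟩ := ih u' v (by simp [hu']; omega) hagree'
    refine ⟨Walk.cons hadj q, by simp [hql], ?_⟩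
    intro w hw
    rw [Walk.support_cons, List.mem_cons] at hw
    rcases hw with hw | hw
    · subst hw
      refine ⟨le_refl _, by omega, ?_⟩
      intro t
      split <;> rename_i ht
      · exact hagree t (Or.inl ht)
      · rfl
    · obtain ⟨hw1, hw2, hw3⟩ := hqs w hw
      simp only [hu', Fin.val_mk] at hw1
      refine ⟨by omega, hw2, ?_⟩
      intro t
      rw [hw3 t]
      split <;> rename_i ht
      · rfl
      · simp only [hu']
        rw [if_neg (by omega)]

lemma reachable_aligned {u v : V d} (hle : (u.1:ℕ) ≤ (v.1:ℕ))
    (hagree : ∀ t : Fin d, ((t:ℕ) < (u.1:ℕ) ∨ (v.1:ℕ) ≤ (t:ℕ)) → u.2 t = v.2 t) :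
    ∃ p : (BF d).Walk u v, p.length = (v.1:ℕ) - (u.1:ℕ) := by
  obtain ⟨p, hp, -⟩ := exists_desc (n := (v.1:ℕ) - (u.1:ℕ)) u v (by omega) hagree
  exact ⟨p, by omega⟩

lemma dist_aligned {u v : V d} (hle : (u.1:ℕ) ≤ (v.1:ℕ))
    (hagree : ∀ t : Fin d, ((t:ℕ) < (u.1:ℕ) ∨ (v.1:ℕ) ≤ (t:ℕ)) → u.2 t = v.2 t) :
    (BF d).dist u v = (v.1:ℕ) - (u.1:ℕ) := by
  obtain ⟨p, hp⟩ := reachable_aligned hle hagree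
  refine le_antisymm (hp ▸ dist_le p) ?_
  obtain ⟨q, hq⟩ := (Reachable.exists_walk_length_eq_dist ⟨p⟩)
  rw [← hq]
  exact length_ge_sub q

/-- Characterization of minimum-length walks between vertices at comparable levels. -/
lemma desc_charact : ∀ (n : ℕ) (u v : V d) (p : (BF d).Walk u v), p.length = n →
    (v.1:ℕ) = (u.1:ℕ) + n →
    (∀ t : Fin d, ((t:ℕ) < (u.1:ℕ) ∨ (v.1:ℕ) ≤ (t:ℕ)) → u.2 t = v.2 t) ∧
    (∀ w ∈ p.support, (u.1:ℕ) ≤ (w.1:ℕ) ∧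
      ∀ t : Fin d, w.2 t = if (t:ℕ) < (w.1:ℕ) then v.2 t else u.2 t) := by
  intro n
  induction n with
  | zero =>
    intro u v p hlen hlv
    cases p with
    | nil =>
      refine ⟨fun t _ => rfl, ?_⟩
      intro w hw
      simp only [Walk.support_nil, List.mem_singleton] at hw
      subst hw
      refine ⟨le_refl _, fun t => ?_⟩
      split <;> rfl
    | cons h q => rw [Walk.length_cons] at hlen; omega
  | succ n ih =>
    intro u v p hlen hlv
    cases p with
    | nil => rw [Walk.length_nil] at hlen; omega
    | @cons _ b _ h q =>
      have hqlen : q.length = n := by simpa using hlen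
      have hbv : (v.1:ℕ) - (b.1:ℕ) ≤ n := hqlen ▸ length_ge_sub q
      have hb : (b.1:ℕ) = (u.1:ℕ) + 1 := by
        rcases adj_level h with h1 | h1 <;> omega
      have hbits : ∀ i : Fin d, (i:ℕ) ≠ (u.1:ℕ) → u.2 i = b.2 i :=
        adj_down h hb.symm
      obtain ⟨hagq, hsupq⟩ := ih b v q hqlen (by omega)
      have hag : ∀ t : Fin d, ((t:ℕ) < (u.1:ℕ) ∨ (v.1:ℕ) ≤ (t:ℕ)) → u.2 t = v.2 t := by
        intro t ht
        have h1 : u.2 t = b.2 t := hbits t (by omega)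
        have h2 : b.2 t = v.2 t := hagq t (by omega)
        rw [h1, h2]
      refine ⟨hag, ?_⟩
      intro w hw
      rw [Walk.support_cons, List.mem_cons] at hw
      rcases hw with hw | hw
      · subst hw
        refine ⟨le_refl _, fun t => ?_⟩
        split <;> rename_i ht
        · exact hag t (Or.inl ht)
        · rfl
      · obtain ⟨hw1, hw2⟩ := hsupq w hw
        refine ⟨by omega, fun t => ?_⟩
        rw [hw2 t]
        split <;> rename_i ht
        · rfl
        · exact (hbits t (by omega)).symm

end BFP
namespace BFP
open Finset SimpleGraph

variable {d : ℕ}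

/-- `a` is strictly above `z` and aligned with it. -/
def Above (a z : V d) : Prop :=
  (a.1:ℕ) < (z.1:ℕ) ∧ ∀ t : Fin d, ((t:ℕ) < (a.1:ℕ) ∨ (z.1:ℕ) ≤ (t:ℕ)) → a.2 t = z.2 t

lemma visible_of_walk {X : Set (V d)} {u v : V d} (p : (BF d).Walk u v)
    (hlen : p.length = (BF d).dist u v)
    (hX : ∀ z ∈ p.support, z ∈ X → z = u ∨ z = v) : IsVisiblePair (BF d) X u v := by
  have hb : p.bypass.length = (BF d).dist u v :=
    le_antisymm (hlen ▸ p.length_bypass_le) (dist_le _)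
  exact ⟨p.bypass, p.bypass_isPath, hb,
    fun z hz => hX z (p.support_bypass_subset hz)⟩

/-- In a mutual-visibility set, there is no point of `X` strictly between two
aligned points of `X`. -/
lemma no_middle {X : Set (V d)} (hmv : MutualVisSet (BF d) X)
    {a w z : V d} (ha : a ∈ X) (hw : w ∈ X) (hz : z ∈ X)
    (haz : Above a z) (hzw : Above z w) : False := by
  obtain ⟨hazl, haz2⟩ := haz
  obtain ⟨hzwl, hzw2⟩ := hzw
  have haw : Above a w := by
    refine ⟨lt_trans hazl hzwl, fun t ht => ?_⟩
    have h1 := haz2 t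
    have h2 := hzw2 t
    rcases ht with ht | ht
    · rw [h1 (Or.inl ht), h2 (Or.inl (by omega))]
    · rw [h1 (Or.inr (by omega)), h2 (Or.inr ht)]
  obtain ⟨p, hpath, hlen, hsupp⟩ := hmv a ha w hw
  have hdist : (BF d).dist a w = (w.1:ℕ) - (a.1:ℕ) := dist_aligned (le_of_lt haw.1) haw.2
  obtain ⟨y, hy, hylv⟩ := exists_level p (z.1:ℕ) (le_of_lt hazl) (le_of_lt hzwl)
  obtain ⟨-, hchar⟩ := desc_charact ((w.1:ℕ) - (a.1:ℕ)) a w p (by omega) (by omega)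
  obtain ⟨-, hy2⟩ := hchar y hy
  have hyz : y = z := by
    refine Prod.ext (Fin.ext (by omega)) ?_
    funext t
    rw [hy2 t, hylv]
    split <;> rename_i ht
    · exact (hzw2 t (Or.inl ht)).symm
    · exact haz2 t (Or.inr (by omega))
  rcases hsupp y hy (hyz ▸ hz) with h | h
  · rw [hyz] at h; subst h; omega
  · rw [hyz] at h; subst h; omega

/-- The key "blocked pair" lemma: two points of `X` at levels `≤ d-1`, agreeing
below the upper one's level, and differing in bit `d-1`, such that every
descending ray below the upper point hits `X`, contradict mutual visibility. -/
lemma blocked_pair {X : Set (V d)} (hmv : MutualVisSet (BF d) X) (hd : 0 < d)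
    {z w : V d} (hz : z ∈ X) (hw : w ∈ X)
    (hlev : (z.1:ℕ) ≤ (w.1:ℕ)) (hwd : (w.1:ℕ) < d)
    (hlow : ∀ t : Fin d, (t:ℕ) < (z.1:ℕ) → z.2 t = w.2 t)
    (hbit : z.2 ⟨d-1, by omega⟩ ≠ w.2 ⟨d-1, by omega⟩)
    (hblocked : ∀ B : Fin d → Bool, (∀ t : Fin d, (t:ℕ) < (z.1:ℕ) → B t = z.2 t) →
      ∃ v : V d, v ∈ X ∧ (z.1:ℕ) < (v.1:ℕ) ∧
        ∀ t : Fin d, v.2 t = if (t:ℕ) < (v.1:ℕ) then B t else z.2 t) :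
    False := by
  have hzd : (z.1:ℕ) < d := lt_of_le_of_lt hlev hwd
  -- the distance
  set D : ℕ := (d - (z.1:ℕ)) + (d - (w.1:ℕ)) with hD
  have hwD : ∀ p : (BF d).Walk z w, D ≤ p.length := by
    intro p
    obtain ⟨y, hy, hylv⟩ := exists_big_level p ⟨d-1, by omega⟩ hbit
    have hyd : (y.1:ℕ) = d := by have := y.1.isLt; simp at hylv; omega
    have hspec := p.take_spec hy
    have hlen : (p.takeUntil y hy).length + (p.dropUntil y hy).length = p.length := by
      rw [← Walk.length_append, hspec]
    have h1 : d - (z.1:ℕ) ≤ (p.takeUntil y hy).length := by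
      have := length_ge_sub (p.takeUntil y hy); omega
    have h2 : d - (w.1:ℕ) ≤ (p.dropUntil y hy).length := by
      have := length_ge_sub' (p.dropUntil y hy); omega
    omega
  -- a walk realizing it
  set bd : V d := (⟨d, by omega⟩, fun t => if (t:ℕ) < (w.1:ℕ) then w.2 t else z.2 t) with hbd
  have hzbd : ∃ p : (BF d).Walk z bd, p.length = d - (z.1:ℕ) :=
    reachable_aligned (by simp [hbd]; omega) (by
      intro t ht
      simp only [hbd]
      rcases ht with ht | ht
      · rw [if_pos (by omega)]; exact hlow t ht
      · simp [hbd] at ht; have := t.isLt; omega)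
  have hwbd : ∃ p : (BF d).Walk w bd, p.length = d - (w.1:ℕ) :=
    reachable_aligned (by simp [hbd]; omega) (by
      intro t ht
      simp only [hbd]
      rcases ht with ht | ht
      · rw [if_pos ht]
      · simp [hbd] at ht; have := t.isLt; omega)
  obtain ⟨p1, hp1⟩ := hzbd
  obtain ⟨p2, hp2⟩ := hwbd
  have hdist : (BF d).dist z w = D := by
    refine le_antisymm ?_ ?_
    · have := dist_le (p1.append p2.reverse)
      rw [Walk.length_append, Walk.length_reverse, hp1, hp2] at this
      exact this
    · obtain ⟨q, hq⟩ := (Reachable.exists_walk_length_eq_dist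
        (⟨p1.append p2.reverse⟩ : (BF d).Reachable z w))
      rw [← hq]; exact hwD q
  -- take the geodesic from mutual visibility
  obtain ⟨p, hpath, hlen, hsupp⟩ := hmv z hz w hw
  rw [hdist] at hlen
  obtain ⟨y, hy, hylv⟩ := exists_big_level p ⟨d-1, by omega⟩ hbit
  have hyd : (y.1:ℕ) = d := by have := y.1.isLt; simp at hylv; omega
  have hspec := p.take_spec hy
  set q1 := p.takeUntil y hy with hq1
  set q2 := p.dropUntil y hy with hq2
  have hlens : q1.length + q2.length = p.length := by rw [← Walk.length_append, hspec]
  have hl1 : d - (z.1:ℕ) ≤ q1.length := by have := length_ge_sub q1; omega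
  have hl2 : d - (w.1:ℕ) ≤ q2.length := by have := length_ge_sub' q2; omega
  have hq1len : q1.length = d - (z.1:ℕ) := by omega
  obtain ⟨hagr, hchar⟩ := desc_charact (d - (z.1:ℕ)) z y q1 hq1len (by omega)
  -- apply blockedness with B = y.2
  obtain ⟨v, hvX, hvlv, hvchar⟩ := hblocked y.2 (fun t ht => (hagr t (Or.inl ht)).symm)
  have hvd : (v.1:ℕ) ≤ d := by have := v.1.isLt; omega
  obtain ⟨y', hy', hy'lv⟩ := exists_level q1 (v.1:ℕ) (by omega) (by omega)
  obtain ⟨-, hy'2⟩ := hchar y' hy'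
  have hy'v : y' = v := by
    refine Prod.ext (Fin.ext (by omega)) ?_
    funext t
    rw [hy'2 t, hy'lv, hvchar t]
  have hy'p : y' ∈ p.support := by
    rw [← hspec, Walk.support_append]
    exact List.mem_append_left _ hy'
  rcases hsupp y' hy'p (hy'v ▸ hvX) with h | h
  · rw [hy'v] at h; subst h; omega
  · -- v = w : impossible by bit d-1
    rw [hy'v] at h; subst h
    have hb := hvchar ⟨d-1, by omega⟩
    rw [if_neg (by simp; omega)] at hb
    exact hbit hb.symm
end BFP
namespace BFP
open Finset SimpleGraph

variable {d : ℕ}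

abbrev C (d : ℕ) := Fin d → Bool

lemma card_agree (s : Finset (Fin d)) (x : C d) :
    (univ.filter (fun c : C d => ∀ t ∈ s, c t = x t)).card = 2 ^ (d - s.card) := by
  have e : {c : C d // ∀ t ∈ s, c t = x t} ≃ ({t : Fin d // t ∉ s} → Bool) :=
    { toFun := fun c t => c.1 t.1
      invFun := fun f => ⟨fun t => if h : t ∈ s then x t else f ⟨t, h⟩, by
        intro t ht; simp [ht]⟩
      left_inv := by
        intro c
        apply Subtype.ext
        funext t
        by_cases h : t ∈ s
        · simp [h, c.2 t h]
        · simp [h]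
      right_inv := by
        intro f
        funext t
        simp [t.2] }
  have h1 : (univ.filter (fun c : C d => ∀ t ∈ s, c t = x t)).card
      = Fintype.card {c : C d // ∀ t ∈ s, c t = x t} := (Fintype.card_subtype _).symm
  rw [h1, Fintype.card_congr e, Fintype.card_fun, Fintype.card_bool]
  congr 1
  rw [Fintype.card_subtype]
  have h3 : (univ.filter (fun x : Fin d => x ∉ s)) = sᶜ := by ext t; simp
  rw [h3, Finset.card_compl]
  simp

lemma card_index_lt (i : ℕ) (hi : i ≤ d) :
    (univ.filter (fun t : Fin d => (t:ℕ) < i)).card = i := by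
  have h : (univ.filter (fun t : Fin d => (t:ℕ) < i)) = Finset.attachFin (Finset.range i)
      (fun m hm => by have := Finset.mem_range.mp hm; omega) := by
    ext t
    simp [Finset.mem_attachFin]
  rw [h, Finset.card_attachFin, Finset.card_range]

lemma card_lowAgree (i : ℕ) (hi : i ≤ d) (x : C d) :
    (univ.filter (fun c : C d => ∀ t : Fin d, (t:ℕ) < i → c t = x t)).card = 2^(d-i) := by
  have h : (univ.filter (fun c : C d => ∀ t : Fin d, (t:ℕ) < i → c t = x t))
      = (univ.filter (fun c : C d => ∀ t ∈ univ.filter (fun t : Fin d => (t:ℕ) < i), c t = x t)) := by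
    apply filter_congr
    intro c _
    simp
  rw [h, card_agree, card_index_lt i hi]

lemma card_highAgree (i : ℕ) (hi : i ≤ d) (x : C d) :
    (univ.filter (fun c : C d => ∀ t : Fin d, i ≤ (t:ℕ) → c t = x t)).card = 2^i := by
  have h : (univ.filter (fun c : C d => ∀ t : Fin d, i ≤ (t:ℕ) → c t = x t))
      = (univ.filter (fun c : C d => ∀ t ∈ univ.filter (fun t : Fin d => ¬ ((t:ℕ) < i)), c t = x t)) := by
    apply filter_congr
    intro c _
    simp [not_lt]
  rw [h, card_agree]
  have := Finset.card_filter_add_card_filter_not (s := (univ : Finset (Fin d)))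
    (p := fun t : Fin d => (t:ℕ) < i)
  have h2 := card_index_lt i hi
  have hd : (univ : Finset (Fin d)).card = d := by simp
  have : (univ.filter (fun t : Fin d => ¬ ((t:ℕ) < i))).card = d - i := by omega
  rw [this]
  congr 1
  omega

/-- `z` lies on the line determined by top column `c` and bottom column `c'`. -/
def onLine (z : V d) (c c' : C d) : Prop :=
  (∀ t : Fin d, (t:ℕ) < (z.1:ℕ) → c' t = z.2 t) ∧ (∀ t : Fin d, (z.1:ℕ) ≤ (t:ℕ) → c t = z.2 t)

instance (z : V d) (c c' : C d) : Decidable (onLine z c c') := by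
  unfold onLine; infer_instance

lemma onLine_eq_of_level {z y : V d} {c c' : C d} (hz : onLine z c c')
    (hy : onLine y c c') (h : (z.1:ℕ) = (y.1:ℕ)) : z = y := by
  refine Prod.ext (Fin.ext h) ?_
  funext t
  by_cases ht : (t:ℕ) < (z.1:ℕ)
  · rw [← hz.1 t ht, ← hy.1 t (by omega)]
  · rw [← hz.2 t (by omega), ← hy.2 t (by omega)]

lemma above_of_onLine {z y : V d} {c c' : C d} (hz : onLine z c c')
    (hy : onLine y c c') (h : (z.1:ℕ) < (y.1:ℕ)) : Above z y := by
  refine ⟨h, fun t ht => ?_⟩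
  rcases ht with ht | ht
  · rw [← hz.1 t ht, ← hy.1 t (by omega)]
  · rw [← hz.2 t (by omega), ← hy.2 t (by omega)]

lemma onLine_pair_of_above {z y : V d} (h : Above z y) :
    onLine z z.2 y.2 ∧ onLine y z.2 y.2 := by
  obtain ⟨hl, ha⟩ := h
  refine ⟨⟨fun t ht => ?_, fun t ht => rfl⟩, ⟨fun t ht => rfl, fun t ht => ?_⟩⟩
  · exact (ha t (Or.inl ht)).symm
  · exact ha t (Or.inr ht)

/-- The set of points of `X` on a given line. -/
def lineX (X : Finset (V d)) (c c' : C d) : Finset (V d) :=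
  X.filter (fun z => onLine z c c')

lemma card_pairs_through (z : V d) :
    ((univ ×ˢ univ : Finset (C d × C d)).filter (fun p => onLine z p.1 p.2)).card = 2^d := by
  have h : ((univ ×ˢ univ : Finset (C d × C d)).filter (fun p => onLine z p.1 p.2))
      = (univ.filter (fun c : C d => ∀ t : Fin d, (z.1:ℕ) ≤ (t:ℕ) → c t = z.2 t)) ×ˢ
        (univ.filter (fun c' : C d => ∀ t : Fin d, (t:ℕ) < (z.1:ℕ) → c' t = z.2 t)) := by
    ext p
    simp only [mem_filter, mem_product, mem_univ, true_and, onLine]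
    erw [Finset.mem_filter]
    simp only [mem_product, mem_univ, true_and]
    tauto
  rw [h, card_product, card_highAgree _ (by omega) , card_lowAgree _ (by omega), ← pow_add]
  congr 1
  have := z.1.isLt
  omega

lemma incidence_sum (X : Finset (V d)) :
    ∑ p ∈ (univ ×ˢ univ : Finset (C d × C d)), (lineX X p.1 p.2).card = X.card * 2^d := by
  have h1 : ∀ p : C d × C d, (lineX X p.1 p.2).card
      = ∑ z ∈ X, (if onLine z p.1 p.2 then 1 else 0) := by
    intro p
    rw [lineX]
    simp [Finset.sum_boole]
  calc ∑ p ∈ (univ ×ˢ univ : Finset (C d × C d)), (lineX X p.1 p.2).card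
      = ∑ p ∈ (univ ×ˢ univ : Finset (C d × C d)), ∑ z ∈ X, (if onLine z p.1 p.2 then 1 else 0) := by
        exact Finset.sum_congr rfl (fun p _ => h1 p)
    _ = ∑ z ∈ X, ∑ p ∈ (univ ×ˢ univ : Finset (C d × C d)), (if onLine z p.1 p.2 then 1 else 0) :=
        Finset.sum_comm
    _ = ∑ z ∈ X, 2^d := by
        refine Finset.sum_congr rfl (fun z _ => ?_)
        rw [show (∑ p ∈ (univ ×ˢ univ : Finset (C d × C d)),
          (if onLine z p.1 p.2 then 1 else 0)) = ((univ ×ˢ univ : Finset (C d × C d)).filter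
            (fun p => onLine z p.1 p.2)).card from by simp [Finset.sum_boole]]
        exact card_pairs_through z
    _ = X.card * 2^d := by rw [Finset.sum_const, smul_eq_mul]

end BFP
namespace BFP
open Finset SimpleGraph

variable {d : ℕ}

instance (a z : V d) : Decidable (Above a z) := by
  unfold Above; infer_instance

lemma cardC : Fintype.card (C d) = 2^d := by
  rw [Fintype.card_fun, Fintype.card_bool, Fintype.card_fin]

lemma second_pt {α : Type*} [DecidableEq α] {s : Finset α} {z : α} (hz : z ∈ s)
    (h2 : s.card = 2) : ∃ y ∈ s, y ≠ z := by
  have h : 0 < (s.erase z).card := by rw [Finset.card_erase_of_mem hz, h2]; norm_num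
  obtain ⟨y, hy⟩ := Finset.card_pos.mp h
  exact ⟨y, Finset.mem_of_mem_erase hy, Finset.ne_of_mem_erase hy⟩

lemma no_three_online {X : Finset (V d)} (hmv : MutualVisSet (BF d) ↑X) {p q r : V d}
    {c c' : C d}
    (hpX : p ∈ X) (hqX : q ∈ X) (hrX : r ∈ X)
    (hp : onLine p c c') (hq : onLine q c c') (hr : onLine r c c')
    (hpq : p ≠ q) (hpr : p ≠ r) (hqr : q ≠ r) : False := by
  have key : ∀ a z w : V d, a ∈ X → z ∈ X → w ∈ X → onLine a c c' → onLine z c c' →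
      onLine w c c' → (a.1:ℕ) < (z.1:ℕ) → (z.1:ℕ) < (w.1:ℕ) → False := by
    intro a z w haX hzX hwX ha hz hw h1 h2
    exact no_middle hmv (Finset.mem_coe.mpr haX) (Finset.mem_coe.mpr hwX)
      (Finset.mem_coe.mpr hzX) (above_of_onLine ha hz h1) (above_of_onLine hz hw h2)
  have hne1 : (p.1:ℕ) ≠ (q.1:ℕ) := fun h => hpq (onLine_eq_of_level hp hq h)
  have hne2 : (p.1:ℕ) ≠ (r.1:ℕ) := fun h => hpr (onLine_eq_of_level hp hr h)
  have hne3 : (q.1:ℕ) ≠ (r.1:ℕ) := fun h => hqr (onLine_eq_of_level hq hr h)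
  rcases Nat.lt_or_ge (p.1:ℕ) (q.1:ℕ) with h1 | h1 <;>
  rcases Nat.lt_or_ge (p.1:ℕ) (r.1:ℕ) with h2 | h2 <;>
  rcases Nat.lt_or_ge (q.1:ℕ) (r.1:ℕ) with h3 | h3
  · exact key p q r hpX hqX hrX hp hq hr h1 h3
  · exact key p r q hpX hrX hqX hp hr hq h2 (by omega)
  · omega
  · exact key r p q hrX hpX hqX hr hp hq (by omega) h1
  · exact key q p r hqX hpX hrX hq hp hr (by omega) h2
  · omega
  · exact key q r p hqX hrX hpX hq hr hp h3 (by omega)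
  · exact key r q p hrX hqX hpX hr hq hp (by omega) (by omega)

lemma line_le_two {X : Finset (V d)} (hmv : MutualVisSet (BF d) ↑X) (c c' : C d) :
    (lineX X c c').card ≤ 2 := by
  by_contra h
  push_neg at h
  obtain ⟨Y, hYs, hY3⟩ := Finset.exists_subset_card_eq h
  obtain ⟨p, q, r, hpq, hpr, hqr, rfl⟩ := Finset.card_eq_three.mp hY3
  have hmem : ∀ w ∈ ({p, q, r} : Finset (V d)), w ∈ X ∧ onLine w c c' := by
    intro w hw
    have := hYs hw
    rw [lineX, Finset.mem_filter] at this
    exact this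
  obtain ⟨hpX, hp⟩ := hmem p (by simp)
  obtain ⟨hqX, hq⟩ := hmem q (by simp)
  obtain ⟨hrX, hr⟩ := hmem r (by simp)
  exact no_three_online hmv hpX hqX hrX hp hq hr hpq hpr hqr

/-- The points of `X` with no aligned point of `X` above them. -/
def XupF (X : Finset (V d)) : Finset (V d) := X.filter (fun z => ∀ a ∈ X, ¬ Above a z)

lemma xupF_subset {X : Finset (V d)} : XupF X ⊆ X := Finset.filter_subset _ _

lemma xup_unique {X : Finset (V d)} {z y : V d} {c c' : C d} (hz : z ∈ XupF X)
    (hy : y ∈ XupF X) (hoz : onLine z c c') (hoy : onLine y c c') : z = y := by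
  rw [XupF, Finset.mem_filter] at hz hy
  rcases Nat.lt_trichotomy (z.1:ℕ) (y.1:ℕ) with h | h | h
  · exact ((hy.2 z hz.1) (above_of_onLine hoz hoy h)).elim
  · exact onLine_eq_of_level hoz hoy h
  · exact ((hz.2 y hy.1) (above_of_onLine hoy hoz h)).elim

lemma top_mem_xup {X : Finset (V d)} (hmv : MutualVisSet (BF d) ↑X) {z w : V d}
    (hz : z ∈ X) (hw : w ∈ X) (hzw : Above z w) : z ∈ XupF X := by
  rw [XupF, Finset.mem_filter]
  refine ⟨hz, fun a ha haz => ?_⟩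
  exact no_middle hmv (Finset.mem_coe.mpr ha) (Finset.mem_coe.mpr hw)
    (Finset.mem_coe.mpr hz) haz hzw

/-- The tiles (Xup points) whose low bits match a given bottom column. -/
def TilesC (X : Finset (V d)) (c' : C d) : Finset (V d) :=
  (XupF X).filter (fun z => ∀ t : Fin d, (t:ℕ) < (z.1:ℕ) → c' t = z.2 t)

def rowsOf (z : V d) : Finset (C d) :=
  univ.filter (fun c => ∀ t : Fin d, (z.1:ℕ) ≤ (t:ℕ) → c t = z.2 t)

def coveredC (X : Finset (V d)) (c' : C d) : Finset (C d) :=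
  univ.filter (fun c => ∃ z ∈ XupF X, onLine z c c')

lemma onLine_iff_tile_row {X : Finset (V d)} {z : V d} {c c' : C d} (hz : z ∈ XupF X) :
    onLine z c c' ↔ (z ∈ TilesC X c' ∧ c ∈ rowsOf z) := by
  constructor
  · intro h
    exact ⟨Finset.mem_filter.mpr ⟨hz, h.1⟩, Finset.mem_filter.mpr ⟨Finset.mem_univ _, h.2⟩⟩
  · intro ⟨h1, h2⟩
    exact ⟨(Finset.mem_filter.mp h1).2, (Finset.mem_filter.mp h2).2⟩

lemma card_rowsOf (z : V d) : (rowsOf z).card = 2^(z.1:ℕ) := by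
  rw [rowsOf]
  exact card_highAgree _ (by have := z.1.isLt; omega) _

lemma card_covered {X : Finset (V d)} (c' : C d) :
    (coveredC X c').card = ∑ z ∈ TilesC X c', 2^(z.1:ℕ) := by
  have hcov : coveredC X c' = (TilesC X c').biUnion rowsOf := by
    ext c
    rw [coveredC, Finset.mem_filter, Finset.mem_biUnion]
    constructor
    · rintro ⟨-, z, hz, hon⟩
      obtain ⟨h1, h2⟩ := (onLine_iff_tile_row hz).mp hon
      exact ⟨z, h1, h2⟩
    · rintro ⟨z, hz, hc⟩
      have hzu : z ∈ XupF X := (Finset.mem_filter.mp hz).1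
      exact ⟨Finset.mem_univ _, z, hzu, (onLine_iff_tile_row hzu).mpr ⟨hz, hc⟩⟩
  rw [hcov, Finset.card_biUnion]
  · exact Finset.sum_congr rfl (fun z _ => card_rowsOf z)
  · intro z hz y hy hne
    rw [Function.onFun, Finset.disjoint_left]
    intro c hcz hcy
    have hzu : z ∈ XupF X := (Finset.mem_filter.mp hz).1
    have hyu : y ∈ XupF X := (Finset.mem_filter.mp hy).1
    exact hne (xup_unique hzu hyu ((onLine_iff_tile_row hzu).mpr ⟨hz, hcz⟩)
      ((onLine_iff_tile_row hyu).mpr ⟨hy, hcy⟩))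

lemma sum_covered {X : Finset (V d)} :
    ∑ c' : C d, (coveredC X c').card = (XupF X).card * 2^d := by
  have h1 : ∀ c' : C d, (coveredC X c').card
      = ∑ z ∈ XupF X, (if (∀ t : Fin d, (t:ℕ) < (z.1:ℕ) → c' t = z.2 t) then 2^(z.1:ℕ) else 0) := by
    intro c'
    rw [card_covered, TilesC, Finset.sum_filter]
  rw [Finset.sum_congr rfl (fun c' _ => h1 c'), Finset.sum_comm]
  have h2 : ∀ z ∈ XupF X, (∑ c' : C d,
      (if (∀ t : Fin d, (t:ℕ) < (z.1:ℕ) → c' t = z.2 t) then 2^(z.1:ℕ) else 0)) = 2^d := by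
    intro z _
    rw [← Finset.sum_filter, Finset.sum_const, smul_eq_mul,
      card_lowAgree _ (by have := z.1.isLt; omega), ← pow_add]
    congr 1
    have := z.1.isLt
    omega
  rw [Finset.sum_congr rfl h2, Finset.sum_const, smul_eq_mul]

lemma uncovered_le_one {X : Finset (V d)} (hmv : MutualVisSet (BF d) ↑X) {c c' : C d}
    (h : c ∉ coveredC X c') : (lineX X c c').card ≤ 1 := by
  by_contra hc
  push_neg at hc
  obtain ⟨z, hz, y, hy, hne⟩ := Finset.one_lt_card.mp hc
  rw [lineX, Finset.mem_filter] at hz hy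
  have hl : (z.1:ℕ) ≠ (y.1:ℕ) := fun hh => hne (onLine_eq_of_level hz.2 hy.2 hh)
  have : ∃ w ∈ XupF X, onLine w c c' := by
    rcases Nat.lt_or_ge (z.1:ℕ) (y.1:ℕ) with hlt | hge
    · exact ⟨z, top_mem_xup hmv hz.1 hy.1 (above_of_onLine hz.2 hy.2 hlt), hz.2⟩
    · exact ⟨y, top_mem_xup hmv hy.1 hz.1 (above_of_onLine hy.2 hz.2 (by omega)), hy.2⟩
  exact h (Finset.mem_filter.mpr ⟨Finset.mem_univ _, this⟩)

lemma sum_n_col {X : Finset (V d)} (hmv : MutualVisSet (BF d) ↑X) (c' : C d) :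
    ∑ c : C d, (lineX X c c').card ≤ (coveredC X c').card + 2^d := by
  have hbound : ∀ c : C d, (lineX X c c').card ≤ (if c ∈ coveredC X c' then 2 else 1) := by
    intro c
    split <;> rename_i hcc
    · exact line_le_two hmv c c'
    · exact uncovered_le_one hmv hcc
  calc ∑ c : C d, (lineX X c c').card ≤ ∑ c : C d, (if c ∈ coveredC X c' then 2 else 1) :=
        Finset.sum_le_sum (fun c _ => hbound c)
    _ = (coveredC X c').card + 2^d := by
        have e0 : ∀ c : C d, (if c ∈ coveredC X c' then 2 else 1)
            = (if c ∈ coveredC X c' then 1 else 0) + 1 := fun c => by split <;> rfl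
        rw [Finset.sum_congr rfl (fun c _ => e0 c), Finset.sum_add_distrib, Finset.sum_boole]
        have e1 : (univ.filter (fun c : C d => c ∈ coveredC X c')) = coveredC X c' := by
          ext c; simp
        rw [Nat.cast_id, e1, Finset.sum_const, smul_eq_mul, mul_one, Finset.card_univ, cardC]

end BFP
namespace BFP
open Finset SimpleGraph

variable {d : ℕ}

lemma partner_below {X : Finset (V d)} {z : V d} (hz : z ∈ XupF X) {B : C d}
    (hB : ∀ t : Fin d, (t:ℕ) < (z.1:ℕ) → B t = z.2 t)
    (h2 : (lineX X z.2 B).card = 2) :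
    ∃ v, v ∈ X ∧ (z.1:ℕ) < (v.1:ℕ) ∧
      ∀ t : Fin d, v.2 t = if (t:ℕ) < (v.1:ℕ) then B t else z.2 t := by
  have hzl : onLine z z.2 B := ⟨hB, fun t _ => rfl⟩
  have hzline : z ∈ lineX X z.2 B :=
    Finset.mem_filter.mpr ⟨xupF_subset hz, hzl⟩
  obtain ⟨y, hy, hyne⟩ := second_pt hzline h2
  rw [lineX, Finset.mem_filter] at hy
  have hl : (y.1:ℕ) ≠ (z.1:ℕ) := fun hh => hyne (onLine_eq_of_level hy.2 hzl hh)
  have hgt : (z.1:ℕ) < (y.1:ℕ) := by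
    rcases Nat.lt_or_ge (y.1:ℕ) (z.1:ℕ) with hlt | hge
    · exact absurd (above_of_onLine hy.2 hzl hlt)
        (((Finset.mem_filter.mp hz).2) y hy.1)
    · omega
  refine ⟨y, hy.1, hgt, fun t => ?_⟩
  split <;> rename_i ht
  · exact (hy.2.1 t ht).symm
  · exact (hy.2.2 t (by omega)).symm

lemma lonely_of_unblocked {X : Finset (V d)} {z : V d} (hz : z ∈ XupF X) {B : C d}
    (hB : ∀ t : Fin d, (t:ℕ) < (z.1:ℕ) → B t = z.2 t)
    (hnp : ¬ ∃ v, v ∈ X ∧ (z.1:ℕ) < (v.1:ℕ) ∧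
      ∀ t : Fin d, v.2 t = if (t:ℕ) < (v.1:ℕ) then B t else z.2 t) :
    lineX X z.2 B = {z} := by
  have hzl : onLine z z.2 B := ⟨hB, fun t _ => rfl⟩
  ext y
  rw [lineX, Finset.mem_filter, Finset.mem_singleton]
  constructor
  · rintro ⟨hyX, hyl⟩
    rcases Nat.lt_trichotomy (y.1:ℕ) (z.1:ℕ) with h | h | h
    · exact ((((Finset.mem_filter.mp hz).2) y hyX) (above_of_onLine hyl hzl h)).elim
    · exact onLine_eq_of_level hyl hzl h
    · exfalso
      refine hnp ⟨y, hyX, h, fun t => ?_⟩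
      split <;> rename_i ht
      · exact (hyl.1 t ht).symm
      · exact (hyl.2 t (by omega)).symm
  · rintro rfl
    exact ⟨xupF_subset hz, hzl⟩

lemma cross_false {X : Finset (V d)} (hmv : MutualVisSet (BF d) ↑X) (hd : 0 < d)
    {z w : V d} (hz : z ∈ XupF X) (hw : w ∈ X)
    (hlev : (z.1:ℕ) ≤ (w.1:ℕ)) (hwd : (w.1:ℕ) < d)
    (hlow : ∀ t : Fin d, (t:ℕ) < (z.1:ℕ) → z.2 t = w.2 t)
    (hbit : z.2 ⟨d-1, by omega⟩ ≠ w.2 ⟨d-1, by omega⟩)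
    (hfull : ∀ B : C d, (∀ t : Fin d, (t:ℕ) < (z.1:ℕ) → B t = z.2 t) →
      (lineX X z.2 B).card = 2) : False := by
  refine blocked_pair hmv hd (Finset.mem_coe.mpr (xupF_subset hz)) (Finset.mem_coe.mpr hw)
    hlev hwd hlow hbit ?_
  intro B hB
  obtain ⟨v, hvX, hvl, hvc⟩ := partner_below hz hB (hfull B hB)
  exact ⟨v, Finset.mem_coe.mpr hvX, hvl, hvc⟩

lemma tiles_samebit {X : Finset (V d)} (hmv : MutualVisSet (BF d) ↑X) (hd : 0 < d)
    {c' : C d}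
    (hltd : ∀ z ∈ TilesC X c', (z.1:ℕ) < d)
    (hfull : ∀ z ∈ TilesC X c', ∀ B : C d, (∀ t : Fin d, (t:ℕ) < (z.1:ℕ) → B t = z.2 t) →
      (lineX X z.2 B).card = 2) :
    ∀ z ∈ TilesC X c', ∀ w ∈ TilesC X c',
      z.2 ⟨d-1, by omega⟩ = w.2 ⟨d-1, by omega⟩ := by
  have key : ∀ z ∈ TilesC X c', ∀ w ∈ TilesC X c', (z.1:ℕ) ≤ (w.1:ℕ) →
      z.2 ⟨d-1, by omega⟩ = w.2 ⟨d-1, by omega⟩ := by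
    intro z hzt w hwt hle
    by_contra hne
    have hzu : z ∈ XupF X := (Finset.mem_filter.mp hzt).1
    have hwX : w ∈ X := xupF_subset (Finset.mem_filter.mp hwt).1
    refine cross_false hmv hd hzu hwX hle (hltd w hwt) ?_ hne (hfull z hzt)
    intro t ht
    rw [← (Finset.mem_filter.mp hzt).2 t ht, (Finset.mem_filter.mp hwt).2 t (by omega)]
  intro z hzt w hwt
  rcases le_total (z.1:ℕ) (w.1:ℕ) with h | h
  · exact key z hzt w hwt h
  · exact (key w hwt z hzt h).symm

lemma covered_le_half {X : Finset (V d)} {c' : C d} (hd : 0 < d)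
    (hltd : ∀ z ∈ TilesC X c', (z.1:ℕ) < d)
    (hsb : ∀ z ∈ TilesC X c', ∀ w ∈ TilesC X c',
      z.2 ⟨d-1, by omega⟩ = w.2 ⟨d-1, by omega⟩) :
    (coveredC X c').card ≤ 2^(d-1) := by
  rcases (TilesC X c').eq_empty_or_nonempty with he | hne
  · rw [card_covered, he, Finset.sum_empty]
    positivity
  · obtain ⟨z0, hz0⟩ := hne
    have hsub : coveredC X c' ⊆
        univ.filter (fun c : C d => c ⟨d-1, by omega⟩ = z0.2 ⟨d-1, by omega⟩) := by
      intro c hc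
      rw [coveredC, Finset.mem_filter] at hc
      obtain ⟨-, z, hzu, hzl⟩ := hc
      have hzt : z ∈ TilesC X c' := Finset.mem_filter.mpr ⟨hzu, hzl.1⟩
      rw [Finset.mem_filter]
      refine ⟨Finset.mem_univ _, ?_⟩
      rw [hzl.2 ⟨d-1, by omega⟩ (by simp; have := hltd z hzt; omega)]
      exact hsb z hzt z0 hz0
    refine le_trans (Finset.card_le_card hsub) ?_
    have h : (univ.filter (fun c : C d => c ⟨d-1, by omega⟩ = z0.2 ⟨d-1, by omega⟩))
        = (univ.filter (fun c : C d => ∀ t ∈ ({(⟨d-1, by omega⟩ : Fin d)} : Finset (Fin d)),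
            c t = z0.2 t)) := by
      apply filter_congr
      intro c _
      simp
    rw [h, card_agree]
    simp

/-- `z` is the unique point of `X` on some line. -/
def lonelyPt (X : Finset (V d)) (z : V d) : Prop :=
  ∃ c c' : C d, lineX X c c' = {z}

/-- The finset of lonely lines. -/
def lonelyL (X : Finset (V d)) : Finset (C d × C d) :=
  (univ ×ˢ univ).filter (fun p => (lineX X p.1 p.2).card = 1)

/-- Main one-sided structural lemma for a hypothetical mutual-visibility set of
size `2^(d+1) - 1`. -/
lemma colMain (hd : 2 ≤ d) {X : Finset (V d)} (hmv : MutualVisSet (BF d) ↑X)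
    (hcard : X.card = 2^(d+1) - 1) :
    (∀ c c' : C d, ∃ z ∈ XupF X, onLine z c c') ∧
    ((lonelyL X).card = 2^d) ∧
    (∀ c' : C d, ∃ z ∈ XupF X, (∀ t : Fin d, (t:ℕ) < (z.1:ℕ) → c' t = z.2 t) ∧ lonelyPt X z) := by
  have hd0 : 0 < d := by omega
  set P : ℕ := 2^d with hP
  have hPpos : 0 < P := by positivity
  have hP1 : 2 ≤ 2^(d-1) := by
    calc 2 = 2^1 := rfl
    _ ≤ 2^(d-1) := Nat.pow_le_pow_right (by norm_num) (by omega)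
  have hPP : P = 2 * 2^(d-1) := by
    rw [hP, ← pow_succ']
    congr 1
    omega
  have hN : X.card = 2*P - 1 := by rw [hcard, hP, pow_succ]; omega
  -- global incidence
  have hinc : ∑ c' : C d, ∑ c : C d, (lineX X c c').card = X.card * P := by
    rw [← incidence_sum X, Finset.sum_product_right]
  -- upper bound per column
  have hcol : ∀ c' : C d, ∑ c : C d, (lineX X c c').card ≤ (coveredC X c').card + P :=
    fun c' => sum_n_col hmv c'
  have hcovle : ∀ c' : C d, (coveredC X c').card ≤ P := by
    intro c'
    calc (coveredC X c').card ≤ (univ : Finset (C d)).card := Finset.card_le_card (subset_univ _)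
    _ = P := by rw [Finset.card_univ, cardC]
  have hup_le : (XupF X).card ≤ P := by
    have h1 : (XupF X).card * P ≤ P * P := by
      rw [← sum_covered]
      calc ∑ c' : C d, (coveredC X c').card ≤ ∑ c' : C d, P :=
            Finset.sum_le_sum (fun c' _ => hcovle c')
      _ = P * P := by rw [Finset.sum_const, smul_eq_mul, Finset.card_univ, cardC]
    exact Nat.le_of_mul_le_mul_right h1 hPpos
  have hup_ge : P - 1 ≤ (XupF X).card := by
    have h1 : X.card * P ≤ ((XupF X).card + P) * P := by
      rw [← hinc]
      calc ∑ c' : C d, ∑ c : C d, (lineX X c c').card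
          ≤ ∑ c' : C d, ((coveredC X c').card + P) := Finset.sum_le_sum (fun c' _ => hcol c')
      _ = ((XupF X).card + P) * P := by
          rw [Finset.sum_add_distrib, sum_covered, Finset.sum_const, smul_eq_mul,
            Finset.card_univ, cardC, add_mul]
    have h2 : X.card ≤ (XupF X).card + P := Nat.le_of_mul_le_mul_right h1 hPpos
    omega
  have hcases : (XupF X).card = P - 1 ∨ (XupF X).card = P := by omega
  rcases hcases with hA | hB
  · -- Case A : impossible
    exfalso
    -- per-column equality
    have hsum_eq : ∑ c' : C d, ((coveredC X c').card + P)
        = ∑ c' : C d, ∑ c : C d, (lineX X c c').card := by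
      rw [hinc, Finset.sum_add_distrib, sum_covered, Finset.sum_const, smul_eq_mul,
        Finset.card_univ, cardC, hA, hN]
      have e : (P - 1) * P + P * P = (2 * P - 1) * P := by
        rw [Nat.sub_mul, Nat.sub_mul, one_mul, two_mul, add_mul]
        have hle : P ≤ P * P := Nat.le_mul_of_pos_left P hPpos
        omega
      rw [e]
    have hcol_eq : ∀ c' : C d, ∑ c : C d, (lineX X c c').card = (coveredC X c').card + P := by
      have := (Finset.sum_eq_sum_iff_of_le (fun c' (_ : c' ∈ univ) => hcol c')).mp hsum_eq.symm
      intro c'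
      exact this c' (Finset.mem_univ _)
    -- pointwise line counts
    have hpoint : ∀ c' c : C d, (lineX X c c').card
        = (if c ∈ coveredC X c' then 2 else 1) := by
      intro c'
      have hb : ∀ c ∈ (univ : Finset (C d)), (lineX X c c').card
          ≤ (if c ∈ coveredC X c' then 2 else 1) := by
        intro c _
        split <;> rename_i hcc
        · exact line_le_two hmv c c'
        · exact uncovered_le_one hmv hcc
      have hs : ∑ c : C d, (lineX X c c').card
          = ∑ c : C d, (if c ∈ coveredC X c' then 2 else 1) := by
        rw [hcol_eq c']
        have e0 : ∀ c : C d, (if c ∈ coveredC X c' then 2 else 1)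
            = (if c ∈ coveredC X c' then 1 else 0) + 1 := fun c => by split <;> rfl
        rw [Finset.sum_congr rfl (fun c _ => e0 c), Finset.sum_add_distrib, Finset.sum_boole]
        have e1 : (univ.filter (fun c : C d => c ∈ coveredC X c')) = coveredC X c' := by
          ext c; simp
        rw [Nat.cast_id, e1, Finset.sum_const, smul_eq_mul, mul_one, Finset.card_univ, cardC]
      have := (Finset.sum_eq_sum_iff_of_le hb).mp hs
      intro c
      exact this c (Finset.mem_univ _)
    -- full lines through Xup points
    have hfull : ∀ z ∈ XupF X, ∀ B : C d, (∀ t : Fin d, (t:ℕ) < (z.1:ℕ) → B t = z.2 t) →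
        (lineX X z.2 B).card = 2 := by
      intro z hz B hB
      have hon : onLine z z.2 B := ⟨hB, fun t _ => rfl⟩
      have hcc : z.2 ∈ coveredC X B :=
        Finset.mem_filter.mpr ⟨Finset.mem_univ _, z, hz, hon⟩
      rw [hpoint B z.2, if_pos hcc]
    -- no level-d Xup points
    have hltd : ∀ z ∈ XupF X, (z.1:ℕ) < d := by
      intro z hz
      by_contra hcz
      have hzd : (z.1:ℕ) = d := by have := z.1.isLt; omega
      have h2 := hfull z hz z.2 (fun t _ => rfl)
      obtain ⟨v, hvX, hvl, -⟩ := partner_below hz (fun t _ => rfl) h2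
      have := v.1.isLt
      omega
    -- covered small
    have hchalf : ∀ c' : C d, (coveredC X c').card ≤ 2^(d-1) := by
      intro c'
      refine covered_le_half hd0 (fun z hz => hltd z (Finset.mem_filter.mp hz).1) ?_
      exact tiles_samebit hmv hd0 (fun z hz => hltd z (Finset.mem_filter.mp hz).1)
        (fun z hz B hB => hfull z (Finset.mem_filter.mp hz).1 B hB)
    -- contradiction
    have hfin : X.card * P ≤ (2^(d-1) + P) * P := by
      rw [← hinc]
      calc ∑ c' : C d, ∑ c : C d, (lineX X c c').card
          = ∑ c' : C d, ((coveredC X c').card + P) :=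
            Finset.sum_congr rfl (fun c' _ => hcol_eq c')
      _ ≤ ∑ c' : C d, (2^(d-1) + P) :=
            Finset.sum_le_sum (fun c' _ => by have := hchalf c'; omega)
      _ = (2^(d-1) + P) * P := by
            rw [Finset.sum_const, smul_eq_mul, Finset.card_univ, cardC]
            ring
    have := Nat.le_of_mul_le_mul_right hfin hPpos
    omega
  · -- Case B
    have hcov_eq : ∀ c' : C d, (coveredC X c').card = P := by
      have hs : ∑ c' : C d, (coveredC X c').card = ∑ c' : C d, P := by
        rw [sum_covered, hB, Finset.sum_const, smul_eq_mul, Finset.card_univ, cardC]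
      have := (Finset.sum_eq_sum_iff_of_le (fun c' (_ : c' ∈ univ) => hcovle c')).mp hs
      intro c'
      exact this c' (Finset.mem_univ _)
    have hcovered : ∀ c c' : C d, ∃ z ∈ XupF X, onLine z c c' := by
      intro c c'
      have : coveredC X c' = univ := by
        apply Finset.eq_of_subset_of_card_le (subset_univ _)
        rw [Finset.card_univ, cardC, hcov_eq c']
      have hc : c ∈ coveredC X c' := this ▸ Finset.mem_univ c
      exact (Finset.mem_filter.mp hc).2
    have hn1 : ∀ c c' : C d, 1 ≤ (lineX X c c').card := by
      intro c c'
      obtain ⟨z, hz, hon⟩ := hcovered c c'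
      exact Finset.card_pos.mpr ⟨z, Finset.mem_filter.mpr ⟨xupF_subset hz, hon⟩⟩
    have hn2 : ∀ c c' : C d, (lineX X c c').card ≤ 2 := fun c c' => line_le_two hmv c c'
    -- lonely count
    have hlonely_card : (lonelyL X).card = P := by
      have hpt : ∀ p : C d × C d, (lineX X p.1 p.2).card
          + (if (lineX X p.1 p.2).card = 1 then 1 else 0) = 2 := by
        intro p
        have := hn1 p.1 p.2
        have := hn2 p.1 p.2
        split <;> omega
      have hsum2 : ∑ p ∈ (univ ×ˢ univ : Finset (C d × C d)), ((lineX X p.1 p.2).card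
          + (if (lineX X p.1 p.2).card = 1 then 1 else 0)) = 2 * (P * P) := by
        rw [Finset.sum_congr rfl (fun p _ => hpt p), Finset.sum_const, smul_eq_mul,
          Finset.card_product, Finset.card_univ, cardC]
        ring
      rw [Finset.sum_add_distrib] at hsum2
      have hA1 : ∑ p ∈ (univ ×ˢ univ : Finset (C d × C d)), (lineX X p.1 p.2).card
          = X.card * P := incidence_sum X
      have hA2 : ∑ p ∈ (univ ×ˢ univ : Finset (C d × C d)),
          (if (lineX X p.1 p.2).card = 1 then 1 else 0) = (lonelyL X).card := by
        rw [Finset.sum_boole, Nat.cast_id, lonelyL]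
      rw [hA1, hA2] at hsum2
      have hNN : X.card + 1 = 2 * P := by omega
      have e2 : X.card * P + P = 2 * (P * P) := by
        have h3 := congrArg (· * P) hNN
        simpa [add_mul, mul_assoc] using h3
      omega
    by_cases hζ : ∃ ζ ∈ XupF X, (ζ.1:ℕ) = d
    · -- Case B1 : impossible
      exfalso
      obtain ⟨ζ, hζu, hζd⟩ := hζ
      have hζline : ∀ c : C d, lineX X c ζ.2 = {ζ} := by
        intro c
        have hon : onLine ζ c ζ.2 := by
          refine ⟨fun t _ => rfl, fun t ht => ?_⟩
          exact absurd ht (by have := t.isLt; omega)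
        ext y
        rw [lineX, Finset.mem_filter, Finset.mem_singleton]
        constructor
        · rintro ⟨hyX, hyl⟩
          rcases Nat.lt_trichotomy (y.1:ℕ) (ζ.1:ℕ) with h | h | h
          · exact ((((Finset.mem_filter.mp hζu).2) y hyX) (above_of_onLine hyl hon h)).elim
          · exact onLine_eq_of_level hyl hon h
          · have := y.1.isLt; omega
        · rintro rfl
          exact ⟨xupF_subset hζu, hon⟩
      have hS : ((univ : Finset (C d)) ×ˢ ({ζ.2} : Finset (C d))) ⊆ lonelyL X := by
        intro p hp
        rw [Finset.mem_product] at hp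
        obtain ⟨-, hp2⟩ := hp
        rw [Finset.mem_singleton] at hp2
        rw [lonelyL, Finset.mem_filter]
        refine ⟨Finset.mem_product.mpr ⟨Finset.mem_univ _, Finset.mem_univ _⟩, ?_⟩
        have : p = (p.1, ζ.2) := by rw [← hp2]
        rw [this]
        simp only []
        rw [hζline p.1, Finset.card_singleton]
      have hScard : ((univ : Finset (C d)) ×ˢ ({ζ.2} : Finset (C d))).card = P := by
        rw [Finset.card_product, Finset.card_singleton, Finset.card_univ, cardC, mul_one]
      have hSeq : ((univ : Finset (C d)) ×ˢ ({ζ.2} : Finset (C d))) = lonelyL X :=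
        Finset.eq_of_subset_of_card_le hS (by rw [hlonely_card, hScard])
      -- full lines through non-ζ Xup points
      have hfull : ∀ z ∈ XupF X, z ≠ ζ →
          ∀ B : C d, (∀ t : Fin d, (t:ℕ) < (z.1:ℕ) → B t = z.2 t) →
          (lineX X z.2 B).card = 2 := by
        intro z hz hzζ B hB
        have h1 := hn1 z.2 B
        have h2 := hn2 z.2 B
        rcases Nat.lt_or_ge (lineX X z.2 B).card 2 with h | h
        · exfalso
          have hl1 : (lineX X z.2 B).card = 1 := by omega
          have hmem : (z.2, B) ∈ lonelyL X := by
            rw [lonelyL, Finset.mem_filter]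
            exact ⟨Finset.mem_product.mpr ⟨Finset.mem_univ _, Finset.mem_univ _⟩, hl1⟩
          rw [← hSeq, Finset.mem_product, Finset.mem_singleton] at hmem
          have hBζ : B = ζ.2 := hmem.2
          have hzmem : z ∈ lineX X z.2 B :=
            Finset.mem_filter.mpr ⟨xupF_subset hz, ⟨hB, fun t _ => rfl⟩⟩
          rw [hBζ, hζline z.2, Finset.mem_singleton] at hzmem
          exact hzζ hzmem
        · omega
      -- pick a column different from ζ.2
      have hc0 : ∃ c0 : C d, c0 ≠ ζ.2 := by
        by_contra hcon
        push_neg at hcon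
        have h1 := hcon (fun _ => true)
        have h2 := hcon (fun _ => false)
        rw [← h2] at h1
        have := congrFun h1 ⟨0, by omega⟩
        simp at this
      obtain ⟨c0, hc0ζ⟩ := hc0
      have htile_lt : ∀ z ∈ TilesC X c0, (z.1:ℕ) < d := by
        intro z hzt
        by_contra hcz
        have hzd : (z.1:ℕ) = d := by have := z.1.isLt; omega
        have hz2 : z.2 = c0 := by
          funext t
          exact ((Finset.mem_filter.mp hzt).2 t (by have := t.isLt; omega)).symm
        have hzζ : z ≠ ζ := by
          intro h
          rw [h] at hz2
          exact hc0ζ hz2.symm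
        have h2 := hfull z (Finset.mem_filter.mp hzt).1 hzζ z.2 (fun t _ => rfl)
        obtain ⟨v, hvX, hvl, -⟩ := partner_below (Finset.mem_filter.mp hzt).1
          (fun t _ => rfl) h2
        have := v.1.isLt
        omega
      have hζnt : ζ ∉ TilesC X c0 := by
        intro h
        exact absurd (htile_lt ζ h) (by omega)
      have hsb := tiles_samebit hmv hd0 htile_lt (fun z hzt B hB =>
        hfull z (Finset.mem_filter.mp hzt).1 (fun h => hζnt (h ▸ hzt)) B hB)
      have := covered_le_half hd0 htile_lt hsb
      rw [hcov_eq c0] at this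
      omega
    · -- Case B2 : conclude
      push_neg at hζ
      have hltd : ∀ z ∈ XupF X, (z.1:ℕ) < d := by
        intro z hz
        have h1 := hζ z hz
        have := z.1.isLt
        omega
      refine ⟨hcovered, hlonely_card, ?_⟩
      intro c'
      -- tiles are not all of the same bit
      have hnotsb : ¬ (∀ z ∈ TilesC X c', ∀ w ∈ TilesC X c',
          z.2 ⟨d-1, by omega⟩ = w.2 ⟨d-1, by omega⟩) := by
        intro hsb
        have := covered_le_half hd0 (fun z hz => hltd z (Finset.mem_filter.mp hz).1) hsb
        rw [hcov_eq c'] at this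
        omega
      push_neg at hnotsb
      obtain ⟨z0, hz0, z1, hz1, hbit01⟩ := hnotsb
      -- order them
      have main : ∀ a b : V d, a ∈ TilesC X c' → b ∈ TilesC X c' → (a.1:ℕ) ≤ (b.1:ℕ) →
          a.2 ⟨d-1, by omega⟩ ≠ b.2 ⟨d-1, by omega⟩ →
          ∃ z ∈ XupF X, (∀ t : Fin d, (t:ℕ) < (z.1:ℕ) → c' t = z.2 t) ∧ lonelyPt X z := by
        intro a b hat hbt hle hne
        have hau : a ∈ XupF X := (Finset.mem_filter.mp hat).1
        have hbX : b ∈ X := xupF_subset (Finset.mem_filter.mp hbt).1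
        have hlow : ∀ t : Fin d, (t:ℕ) < (a.1:ℕ) → a.2 t = b.2 t := by
          intro t ht
          rw [← (Finset.mem_filter.mp hat).2 t ht, (Finset.mem_filter.mp hbt).2 t (by omega)]
        have hnotfull : ¬ (∀ B : C d, (∀ t : Fin d, (t:ℕ) < (a.1:ℕ) → B t = a.2 t) →
            (lineX X a.2 B).card = 2) := by
          intro hfull
          exact cross_false hmv hd0 hau hbX hle
            (hltd b (Finset.mem_filter.mp hbt).1) hlow hne hfull
        push_neg at hnotfull
        obtain ⟨B, hB, hn⟩ := hnotfull
        have h1 := hn1 a.2 B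
        have h2 := hn2 a.2 B
        have hl1 : (lineX X a.2 B).card = 1 := by omega
        obtain ⟨w, hw⟩ := Finset.card_eq_one.mp hl1
        have haw : a ∈ lineX X a.2 B :=
          Finset.mem_filter.mpr ⟨xupF_subset hau, ⟨hB, fun t _ => rfl⟩⟩
        rw [hw, Finset.mem_singleton] at haw
        refine ⟨a, hau, (Finset.mem_filter.mp hat).2, a.2, B, ?_⟩
        rw [hw, haw]
      rcases le_total (z0.1:ℕ) (z1.1:ℕ) with h | h
      · exact main z0 z1 hz0 hz1 h hbit01
      · exact main z1 z0 hz1 hz0 h (Ne.symm hbit01)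

end BFP
namespace BFP
open Finset SimpleGraph

variable {d : ℕ}

def revC (c : C d) : C d := fun t => c ⟨d - 1 - (t:ℕ), by have := t.isLt; omega⟩

def flipV (z : V d) : V d := (⟨d - (z.1:ℕ), by have := z.1.isLt; omega⟩, revC z.2)

lemma revC_revC (c : C d) : revC (revC c) = c := by
  funext t
  show c _ = c t
  congr 1
  apply Fin.ext
  have := t.isLt
  simp only []
  omega

lemma flip_flip (z : V d) : flipV (flipV z) = z := by
  apply Prod.ext
  · apply Fin.ext
    have := z.1.isLt
    show d - (d - (z.1:ℕ)) = (z.1:ℕ)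
    omega
  · exact revC_revC z.2

lemma flip_inj : Function.Injective (flipV (d := d)) :=
  Function.LeftInverse.injective flip_flip

lemma flip_level (z : V d) : ((flipV z).1 : ℕ) = d - (z.1:ℕ) := rfl

lemma flip_adj {u v : V d} (h : (BF d).Adj u v) : (BF d).Adj (flipV u) (flipV v) := by
  rw [adj_iff] at h ⊢
  obtain ⟨hne, hR⟩ := h
  have hud := u.1.isLt
  have hvd := v.1.isLt
  refine ⟨fun he => hne (flip_inj he), ?_⟩
  rcases hR with ⟨hl, hb⟩ | ⟨hl, hb⟩
  · right
    refine ⟨by show (d - (v.1:ℕ)) + 1 = d - (u.1:ℕ); omega, ?_⟩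
    intro i hi
    have hid := i.isLt
    have hi' : (i:ℕ) ≠ d - (v.1:ℕ) := hi
    show v.2 _ = u.2 _
    exact (hb ⟨d - 1 - (i:ℕ), by omega⟩ (by simp only []; omega)).symm
  · left
    refine ⟨by show (d - (u.1:ℕ)) + 1 = d - (v.1:ℕ); omega, ?_⟩
    intro i hi
    have hid := i.isLt
    have hi' : (i:ℕ) ≠ d - (u.1:ℕ) := hi
    show u.2 _ = v.2 _
    exact (hb ⟨d - 1 - (i:ℕ), by omega⟩ (by simp only []; omega)).symm

def flipHom : BF d →g BF d where
  toFun := flipV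
  map_rel' := flip_adj

lemma dist_flip_le (u v : V d) :
    (BF d).dist (flipV u) (flipV v) ≤ (BF d).dist u v := by
  by_cases h : (BF d).Reachable u v
  · obtain ⟨p, hp⟩ := h.exists_walk_length_eq_dist
    calc (BF d).dist (flipV u) (flipV v) ≤ (p.map flipHom).length := dist_le _
    _ = (BF d).dist u v := by rw [Walk.length_map, hp]
  · rw [dist_eq_zero_of_not_reachable h, dist_eq_zero_of_not_reachable ?_]
    intro hr
    apply h
    obtain ⟨q⟩ := hr
    have : (BF d).Reachable (flipV (flipV u)) (flipV (flipV v)) := ⟨q.map flipHom⟩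
    rwa [flip_flip, flip_flip] at this

lemma dist_flip (u v : V d) :
    (BF d).dist (flipV u) (flipV v) = (BF d).dist u v := by
  refine le_antisymm (dist_flip_le u v) ?_
  have := dist_flip_le (flipV u) (flipV v)
  rwa [flip_flip, flip_flip] at this

lemma mv_flip {X : Set (V d)} (h : MutualVisSet (BF d) X) :
    MutualVisSet (BF d) (flipV '' X) := by
  rintro _ ⟨x, hx, rfl⟩ _ ⟨y, hy, rfl⟩
  obtain ⟨p, hp, hlen, hsupp⟩ := h x hx y hy
  refine visible_of_walk (p.map flipHom) ?_ ?_
  · erw [Walk.length_map]; rw [hlen, dist_flip]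
  · intro z hz hzX
    erw [Walk.support_map] at hz; rw [List.mem_map] at hz
    obtain ⟨w, hw, hwz⟩ := hz
    subst hwz
    rw [Set.mem_image] at hzX
    obtain ⟨w', hw', he⟩ := hzX
    have hww : w' = w := flip_inj he
    rcases hsupp w hw (hww ▸ hw') with h1 | h1
    · left; rw [h1]; rfl
    · right; rw [h1]; rfl

lemma above_flip {a z : V d} (h : Above a z) : Above (flipV z) (flipV a) := by
  obtain ⟨hl, hb⟩ := h
  have had := a.1.isLt
  have hzd := z.1.isLt
  refine ⟨by rw [flip_level, flip_level]; omega, ?_⟩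
  intro t ht
  have htd := t.isLt
  rw [flip_level, flip_level] at ht
  show z.2 _ = a.2 _
  exact (hb ⟨d - 1 - (t:ℕ), by omega⟩ (by simp only []; omega)).symm

lemma onLine_flip {z : V d} {c c' : C d} (h : onLine z c c') :
    onLine (flipV z) (revC c') (revC c) := by
  obtain ⟨h1, h2⟩ := h
  have hzd := z.1.isLt
  constructor
  · intro t ht
    have htd := t.isLt
    rw [flip_level] at ht
    show c _ = z.2 _
    exact h2 ⟨d - 1 - (t:ℕ), by omega⟩ (by simp only []; omega)
  · intro t ht
    have htd := t.isLt
    rw [flip_level] at ht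
    show c' _ = z.2 _
    exact h1 ⟨d - 1 - (t:ℕ), by omega⟩ (by simp only []; omega)

lemma image_flip_flip (X : Finset (V d)) : (X.image flipV).image flipV = X := by
  rw [Finset.image_image]
  have : (flipV (d := d)) ∘ flipV = id := funext flip_flip
  rw [this, Finset.image_id]

lemma lineX_flip (X : Finset (V d)) (c c' : C d) :
    lineX (X.image flipV) (revC c') (revC c) = (lineX X c c').image flipV := by
  ext y
  constructor
  · intro hy
    rw [lineX, Finset.mem_filter] at hy
    obtain ⟨hy1, hon⟩ := hy
    rw [Finset.mem_image] at hy1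
    obtain ⟨w, hw, rfl⟩ := hy1
    refine Finset.mem_image_of_mem _ ?_
    rw [lineX, Finset.mem_filter]
    refine ⟨hw, ?_⟩
    have h2 := onLine_flip hon
    rwa [revC_revC, revC_revC, flip_flip] at h2
  · intro hy
    rw [Finset.mem_image] at hy
    obtain ⟨w, hw, rfl⟩ := hy
    rw [lineX, Finset.mem_filter] at hw ⊢
    exact ⟨Finset.mem_image_of_mem _ hw.1, onLine_flip hw.2⟩

lemma lonelyPt_flip {X : Finset (V d)} {z : V d} (h : lonelyPt X z) :
    lonelyPt (X.image flipV) (flipV z) := by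
  obtain ⟨c, c', hcc⟩ := h
  refine ⟨revC c', revC c, ?_⟩
  rw [lineX_flip, hcc, Finset.image_singleton]

end BFP
namespace BFP
open Finset SimpleGraph

variable {d : ℕ}

lemma lonely_in_xup {X : Finset (V d)}
    (hC1 : ∀ c c' : C d, ∃ z ∈ XupF X, onLine z c c')
    {z : V d} (hz : lonelyPt X z) : z ∈ XupF X := by
  obtain ⟨a, b, hab⟩ := hz
  obtain ⟨y, hy, hyon⟩ := hC1 a b
  have hm : y ∈ lineX X a b := Finset.mem_filter.mpr ⟨xupF_subset hy, hyon⟩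
  rw [hab, Finset.mem_singleton] at hm
  rwa [← hm]

lemma lonely_singleton {X : Finset (V d)}
    (hC1 : ∀ c c' : C d, ∃ z ∈ XupF X, onLine z c c')
    (hnb : ∀ w, lonelyPt X w → ∀ y ∈ X, ¬ Above w y)
    {w : V d} (hw : lonelyPt X w) {c c' : C d} (hon : onLine w c c') :
    lineX X c c' = {w} := by
  have hxup : w ∈ XupF X := lonely_in_xup hC1 hw
  ext y
  rw [lineX, Finset.mem_filter, Finset.mem_singleton]
  constructor
  · rintro ⟨hyX, hyon⟩
    rcases Nat.lt_trichotomy (y.1:ℕ) (w.1:ℕ) with h | h | h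
    · exact (((Finset.mem_filter.mp hxup).2 y hyX) (above_of_onLine hyon hon h)).elim
    · exact onLine_eq_of_level hyon hon h
    · exact ((hnb w hw y hyX) (above_of_onLine hon hyon h)).elim
  · rintro rfl
    exact ⟨xupF_subset hxup, hon⟩

lemma lonely_unique {X : Finset (V d)}
    (hC1 : ∀ c c' : C d, ∃ z ∈ XupF X, onLine z c c')
    (hC2 : (lonelyL X).card = 2^d)
    (hnb : ∀ w, lonelyPt X w → ∀ y ∈ X, ¬ Above w y) :
    ∀ w₁ w₂, lonelyPt X w₁ → lonelyPt X w₂ → w₁ = w₂ := by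
  have hlines : ∀ w, lonelyPt X w →
      ((univ ×ˢ univ : Finset (C d × C d)).filter (fun p => onLine w p.1 p.2)) = lonelyL X := by
    intro w hw
    apply Finset.eq_of_subset_of_card_le
    · intro p hp
      rw [Finset.mem_filter] at hp
      rw [lonelyL, Finset.mem_filter]
      exact ⟨hp.1, by rw [lonely_singleton hC1 hnb hw hp.2, Finset.card_singleton]⟩
    · rw [hC2, card_pairs_through]
  intro w₁ w₂ h1 h2
  have hne : (lonelyL X).Nonempty := by
    rw [← Finset.card_pos, hC2]
    positivity
  obtain ⟨p, hp⟩ := hne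
  have hp1 : onLine w₁ p.1 p.2 := by
    rw [← hlines w₁ h1] at hp
    exact (Finset.mem_filter.mp hp).2
  have hp2 : onLine w₂ p.1 p.2 := by
    rw [← hlines w₂ h2] at hp
    exact (Finset.mem_filter.mp hp).2
  have e1 := lonely_singleton hC1 hnb h1 hp1
  have e2 := lonely_singleton hC1 hnb h2 hp2
  exact Finset.singleton_injective (e1.symm.trans e2)

lemma no_big (hd : 2 ≤ d) {X : Finset (V d)} (hmv : MutualVisSet (BF d) ↑X)
    (hcard : X.card = 2^(d+1) - 1) : False := by
  obtain ⟨hC1, hC2, hC4⟩ := colMain hd hmv hcard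
  set X' := X.image flipV with hX'
  have hmv' : MutualVisSet (BF d) ↑X' := by
    rw [hX', Finset.coe_image]
    exact mv_flip hmv
  have hcard' : X'.card = 2^(d+1) - 1 := by
    rw [hX', Finset.card_image_of_injective _ flip_inj, hcard]
  obtain ⟨hC1', hC2', hC4'⟩ := colMain hd hmv' hcard'
  have htr : ∀ z, lonelyPt X z → lonelyPt X' (flipV z) := fun z hz => lonelyPt_flip hz
  have htr' : ∀ z, lonelyPt X' z → lonelyPt X (flipV z) := by
    intro z hz
    have h2 := lonelyPt_flip hz
    rwa [hX', image_flip_flip] at h2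
  have hnb : ∀ w, lonelyPt X w → ∀ y ∈ X, ¬ Above w y := by
    intro w hw y hy hab
    have h1 : flipV w ∈ XupF X' := lonely_in_xup hC1' (htr w hw)
    have h2 : Above (flipV y) (flipV w) := above_flip hab
    have h3 : flipV y ∈ X' := Finset.mem_image_of_mem _ hy
    exact (Finset.mem_filter.mp h1).2 (flipV y) h3 h2
  have hnb' : ∀ w, lonelyPt X' w → ∀ y ∈ X', ¬ Above w y := by
    intro w hw y hy hab
    have h1 : flipV w ∈ XupF X := lonely_in_xup hC1 (htr' w hw)
    have h2 : Above (flipV y) (flipV w) := above_flip hab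
    have h3 : flipV y ∈ X := by
      have := Finset.mem_image_of_mem flipV hy
      rwa [hX', image_flip_flip] at this
    exact (Finset.mem_filter.mp h1).2 (flipV y) h3 h2
  have uniq := lonely_unique hC1 hC2 hnb
  have uniq' := lonely_unique hC1' hC2' hnb'
  -- the unique lonely point of X has level 0
  obtain ⟨ω, hωu, hωlowF, hωl⟩ := hC4 (fun _ => false)
  obtain ⟨ω₂, hω₂u, hωlowT, hω₂l⟩ := hC4 (fun _ => true)
  have heq : ω₂ = ω := uniq ω₂ ω hω₂l hωl
  have hd0 : 0 < d := by omega
  have hlv0 : (ω.1:ℕ) = 0 := by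
    by_contra h0
    have h1 := hωlowF ⟨0, by omega⟩ (by show (0:ℕ) < _; omega)
    have h2 := hωlowT ⟨0, by omega⟩ (by rw [heq]; show (0:ℕ) < _; omega)
    rw [heq] at h2
    rw [← h1] at h2
    exact Bool.noConfusion h2
  obtain ⟨ω', hω'u, hω'lowF, hω'l⟩ := hC4' (fun _ => false)
  obtain ⟨ω'₂, hω'₂u, hω'lowT, hω'₂l⟩ := hC4' (fun _ => true)
  have heq' : ω'₂ = ω' := uniq' ω'₂ ω' hω'₂l hω'l
  have hlv0' : (ω'.1:ℕ) = 0 := by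
    by_contra h0
    have h1 := hω'lowF ⟨0, by omega⟩ (by show (0:ℕ) < _; omega)
    have h2 := hω'lowT ⟨0, by omega⟩ (by rw [heq']; show (0:ℕ) < _; omega)
    rw [heq'] at h2
    rw [← h1] at h2
    exact Bool.noConfusion h2
  -- bridge
  have hbr : flipV ω = ω' := uniq' (flipV ω) ω' (htr ω hωl) hω'l
  have : ((flipV ω).1 : ℕ) = d - 0 := by rw [flip_level, hlv0]
  rw [hbr, hlv0'] at this
  omega

lemma mv_ncard_le (hd : 2 ≤ d) {X : Set (V d)} (hmv : MutualVisSet (BF d) X) :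
    X.ncard ≤ 2^(d+1) - 2 := by
  by_contra hc
  push_neg at hc
  have h2 : 2 ≤ 2^(d+1) := by
    calc 2 = 2^1 := rfl
    _ ≤ 2^(d+1) := Nat.pow_le_pow_right (by norm_num) (by omega)
  have h1 : 2^(d+1) - 1 ≤ X.ncard := by omega
  obtain ⟨Y, hYX, hY⟩ := Set.exists_subset_card_eq h1
  have hmvY : MutualVisSet (BF d) Y := by
    intro x hx y hy
    obtain ⟨p, hp, hl, hs⟩ := hmv x (hYX hx) y (hYX hy)
    exact ⟨p, hp, hl, fun z hz hzY => hs z hz (hYX hzY)⟩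
  have hfin : Y.Finite := Set.toFinite Y
  have hmvF : MutualVisSet (BF d) ↑(hfin.toFinset) := by
    rw [Set.Finite.coe_toFinset]
    exact hmvY
  refine no_big hd hmvF ?_
  rw [← Set.ncard_eq_toFinset_card Y hfin, hY]

end BFP
namespace BFP
open Finset SimpleGraph

variable {d : ℕ}

def u0 (d : ℕ) : V d := (⟨0, by omega⟩, fun _ => false)
def v0 (d : ℕ) : V d := (⟨d, by omega⟩, fun _ => false)

def X0 (d : ℕ) : Set (V d) :=
  {z | ((z.1:ℕ) = 0 ∨ (z.1:ℕ) = d) ∧ z ≠ u0 d ∧ z ≠ v0 d}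

lemma visible_flip {X : Set (V d)} {x y : V d} (h : IsVisiblePair (BF d) X x y) :
    IsVisiblePair (BF d) (flipV '' X) (flipV x) (flipV y) := by
  obtain ⟨p, hp, hlen, hsupp⟩ := h
  refine visible_of_walk (p.map flipHom) ?_ ?_
  · erw [Walk.length_map]; rw [hlen, dist_flip]
  · intro z hz hzX
    erw [Walk.support_map] at hz; rw [List.mem_map] at hz
    obtain ⟨w, hw, hwz⟩ := hz
    subst hwz
    rw [Set.mem_image] at hzX
    obtain ⟨w', hw', he⟩ := hzX
    have hww : w' = w := flip_inj he
    rcases hsupp w hw (hww ▸ hw') with h1 | h1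
    · left; rw [h1]; rfl
    · right; rw [h1]; rfl

lemma flip_u0 : flipV (u0 d) = v0 d := by
  apply Prod.ext
  · apply Fin.ext
    show d - 0 = d
    omega
  · funext t
    rfl

lemma flip_v0 : flipV (v0 d) = u0 d := by
  apply Prod.ext
  · apply Fin.ext
    show d - d = 0
    omega
  · funext t
    rfl

lemma X0_flip_mem {z : V d} (hz : z ∈ X0 d) : flipV z ∈ X0 d := by
  obtain ⟨hlv, hu, hv⟩ := hz
  refine ⟨?_, ?_, ?_⟩
  · rw [flip_level]
    rcases hlv with h | h <;> [right; left] <;> omega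
  · intro he
    apply hv
    have := congrArg flipV he
    rwa [flip_flip, flip_u0] at this
  · intro he
    apply hu
    have := congrArg flipV he
    rwa [flip_flip, flip_v0] at this

lemma X0_flip : flipV '' (X0 d) = X0 d := by
  ext z
  constructor
  · rintro ⟨w, hw, rfl⟩
    exact X0_flip_mem hw
  · intro hz
    exact ⟨flipV z, X0_flip_mem hz, flip_flip z⟩

lemma top_visible (hd : 2 ≤ d) (x y : V d) (hy : y ∈ X0 d)
    (hx0 : (x.1:ℕ) = 0) : IsVisiblePair (BF d) (X0 d) x y := by
  by_cases hxy : x = y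
  · subst hxy
    refine ⟨Walk.nil, Walk.IsPath.nil, by rw [Walk.length_nil, dist_self], ?_⟩
    intro z hz _
    left
    simpa using hz
  rcases hy.1 with hy0 | hyd
  · -- both at level 0
    have hcolne : x.2 ≠ y.2 := by
      intro he
      exact hxy (Prod.ext (Fin.ext (by omega)) he)
    have hDne : (univ.filter (fun t : Fin d => x.2 t ≠ y.2 t)).Nonempty := by
      by_contra hD
      rw [Finset.not_nonempty_iff_eq_empty, Finset.filter_eq_empty_iff] at hD
      apply hcolne
      funext t
      have := hD (Finset.mem_univ t)
      simpa using this
    set D := univ.filter (fun t : Fin d => x.2 t ≠ y.2 t) with hD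
    set h : Fin d := D.max' hDne with hh
    have hhd : x.2 h ≠ y.2 h := (Finset.mem_filter.mp (D.max'_mem hDne)).2
    have hmax : ∀ t : Fin d, (h:ℕ) < (t:ℕ) → x.2 t = y.2 t := by
      intro t ht
      by_contra hne
      have htD : t ∈ D := Finset.mem_filter.mpr ⟨Finset.mem_univ _, hne⟩
      have := D.le_max' t htD
      rw [← hh] at this
      exact absurd ht (by exact not_lt.mpr this)
    have hlow : ∀ p : (BF d).Walk x y, 2*((h:ℕ)+1) ≤ p.length := by
      intro p
      obtain ⟨w, hwp, hwl⟩ := exists_big_level p h hhd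
      have hspec := p.take_spec hwp
      have hlen2 : (p.takeUntil w hwp).length + (p.dropUntil w hwp).length = p.length := by
        rw [← Walk.length_append, hspec]
      have l1 := length_ge_sub (p.takeUntil w hwp)
      have l2 := length_ge_sub' (p.dropUntil w hwp)
      omega
    have hhlt := h.isLt
    by_cases hcase : (h:ℕ) + 1 < d
    · -- bottom at level h+1 (an interior level)
      set b : V d := (⟨(h:ℕ)+1, by omega⟩, fun t => if (t:ℕ) < (h:ℕ)+1 then y.2 t else x.2 t)
        with hb
      have hb1 : (b.1:ℕ) = (h:ℕ)+1 := rfl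
      obtain ⟨p1, hp1len, hp1s⟩ := exists_desc (n := (h:ℕ)+1) x b
        (by show ((h:ℕ)+1) = (x.1:ℕ) + ((h:ℕ)+1); omega)
        (by
          intro t ht
          show x.2 t = _
          rcases ht with ht | ht
          · omega
          · show x.2 t = (if (t:ℕ) < (h:ℕ)+1 then y.2 t else x.2 t)
            rw [if_neg (by show ¬ ((t:ℕ) < (h:ℕ)+1); omega)])
      obtain ⟨p2, hp2len, hp2s⟩ := exists_desc (n := (h:ℕ)+1) y b
        (by show ((h:ℕ)+1) = (y.1:ℕ) + ((h:ℕ)+1); omega)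
        (by
          intro t ht
          show y.2 t = _
          rcases ht with ht | ht
          · omega
          · show y.2 t = (if (t:ℕ) < (h:ℕ)+1 then y.2 t else x.2 t)
            rw [if_neg (by show ¬ ((t:ℕ) < (h:ℕ)+1); omega), ← hmax t (by omega)])
      set p := p1.append p2.reverse with hp
      have hplen : p.length = 2*((h:ℕ)+1) := by
        rw [hp, Walk.length_append, Walk.length_reverse, hp1len, hp2len]
        ring
      have hdist : (BF d).dist x y = 2*((h:ℕ)+1) := by
        refine le_antisymm (hplen ▸ dist_le p) ?_
        obtain ⟨q, hq⟩ := (Reachable.exists_walk_length_eq_dist (⟨p⟩ : (BF d).Reachable x y))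
        rw [← hq]
        exact hlow q
      refine visible_of_walk p (by rw [hplen, hdist]) ?_
      intro z hz hzX
      rw [hp, Walk.support_append] at hz
      rcases List.mem_append.mp hz with hz1 | hz2
      · obtain ⟨-, hzl, hzc⟩ := hp1s z hz1
        rcases hzX.1 with hz0 | hzd
        · left
          refine Prod.ext (Fin.ext (by omega)) ?_
          funext t
          rw [hzc t, if_neg (by omega)]
        · exfalso
          omega
      · have hz2' : z ∈ p2.support := by
          have := List.mem_of_mem_tail hz2
          rwa [Walk.support_reverse, List.mem_reverse] at this
        obtain ⟨-, hzl, hzc⟩ := hp2s z hz2'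
        rcases hzX.1 with hz0 | hzd
        · right
          refine Prod.ext (Fin.ext (by omega)) ?_
          funext t
          rw [hzc t, if_neg (by omega)]
        · exfalso
          omega
    · -- h = d-1 : route through v0
      have hhe : (h:ℕ)+1 = d := by omega
      obtain ⟨p1, hp1len, hp1s⟩ := exists_desc (n := d) x (v0 d)
        (by show (((v0 d).1:ℕ)) = (x.1:ℕ) + d; show d = (x.1:ℕ) + d; omega)
        (by
          intro t ht
          rcases ht with ht | ht
          · omega
          · exact absurd (show d ≤ (t:ℕ) from ht) (by have := t.isLt; omega))
      obtain ⟨p2, hp2len, hp2s⟩ := exists_desc (n := d) y (v0 d)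
        (by show (((v0 d).1:ℕ)) = (y.1:ℕ) + d; show d = (y.1:ℕ) + d; omega)
        (by
          intro t ht
          rcases ht with ht | ht
          · omega
          · exact absurd (show d ≤ (t:ℕ) from ht) (by have := t.isLt; omega))
      set p := p1.append p2.reverse with hp
      have hplen : p.length = 2*((h:ℕ)+1) := by
        rw [hp, Walk.length_append, Walk.length_reverse, hp1len, hp2len]
        omega
      have hdist : (BF d).dist x y = 2*((h:ℕ)+1) := by
        refine le_antisymm (hplen ▸ dist_le p) ?_
        obtain ⟨q, hq⟩ := (Reachable.exists_walk_length_eq_dist (⟨p⟩ : (BF d).Reachable x y))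
        rw [← hq]
        exact hlow q
      refine visible_of_walk p (by rw [hplen, hdist]) ?_
      intro z hz hzX
      rw [hp, Walk.support_append] at hz
      rcases List.mem_append.mp hz with hz1 | hz2
      · obtain ⟨-, hzl, hzc⟩ := hp1s z hz1
        rcases hzX.1 with hz0 | hzd
        · left
          refine Prod.ext (Fin.ext (by omega)) ?_
          funext t
          rw [hzc t, if_neg (by omega)]
        · exfalso
          apply hzX.2.2
          refine Prod.ext (Fin.ext (by show (z.1:ℕ) = d; omega)) ?_
          funext t
          rw [hzc t, if_pos (by have := t.isLt; omega)]
      · have hz2' : z ∈ p2.support := by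
          have := List.mem_of_mem_tail hz2
          rwa [Walk.support_reverse, List.mem_reverse] at this
        obtain ⟨-, hzl, hzc⟩ := hp2s z hz2'
        rcases hzX.1 with hz0 | hzd
        · right
          refine Prod.ext (Fin.ext (by omega)) ?_
          funext t
          rw [hzc t, if_neg (by omega)]
        · exfalso
          apply hzX.2.2
          refine Prod.ext (Fin.ext (by show (z.1:ℕ) = d; omega)) ?_
          funext t
          rw [hzc t, if_pos (by have := t.isLt; omega)]
  · -- y at level d : the aligned case
    have hag : ∀ t : Fin d, ((t:ℕ) < (x.1:ℕ) ∨ ((y.1:ℕ)) ≤ (t:ℕ)) → x.2 t = y.2 t := by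
      intro t ht
      have := t.isLt
      omega
    obtain ⟨p, hplen, hps⟩ := exists_desc (n := d) x y (by omega) hag
    refine visible_of_walk p ?_ ?_
    · rw [hplen, dist_aligned (by omega) hag]
      omega
    · intro z hz hzX
      obtain ⟨-, hzl, hzc⟩ := hps z hz
      rcases hzX.1 with hz0 | hzd
      · left
        refine Prod.ext (Fin.ext (by omega)) ?_
        funext t
        rw [hzc t, if_neg (by omega)]
      · right
        refine Prod.ext (Fin.ext (by omega)) ?_
        funext t
        rw [hzc t, if_pos (by have := t.isLt; omega)]

lemma X0_mv (hd : 2 ≤ d) : MutualVisSet (BF d) (X0 d) := by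
  intro x hx y hy
  rcases hx.1 with hx0 | hxd
  · exact top_visible hd x y hy hx0
  · have hfx : flipV x ∈ X0 d := X0_flip_mem hx
    have hfy : flipV y ∈ X0 d := X0_flip_mem hy
    have h1 : IsVisiblePair (BF d) (X0 d) (flipV x) (flipV y) :=
      top_visible hd (flipV x) (flipV y) hfy (by rw [flip_level]; omega)
    have h2 := visible_flip h1
    rwa [X0_flip, flip_flip, flip_flip] at h2

lemma X0_ncard (hd : 2 ≤ d) : (X0 d).ncard = 2^(d+1) - 2 := by
  classical
  set A : Finset (V d) := (univ.image (fun c : C d => ((⟨0, by omega⟩ : Fin (d+1)), c))).erase (u0 d)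
    with hA
  set B : Finset (V d) := (univ.image (fun c : C d => ((⟨d, by omega⟩ : Fin (d+1)), c))).erase (v0 d)
    with hB
  have hset : X0 d = ↑(A ∪ B) := by
    ext z
    simp only [Finset.coe_union, Set.mem_union, hA, hB, Finset.coe_erase, Set.mem_diff,
      Finset.coe_image, Set.mem_image, Finset.coe_univ, Set.mem_univ, true_and,
      Set.mem_singleton_iff]
    constructor
    · rintro ⟨hlv, hu, hv⟩
      rcases hlv with h0 | hD
      · left
        refine ⟨⟨z.2, ?_⟩, hu⟩
        exact Prod.ext (Fin.ext (by show (0:ℕ) = (z.1:ℕ); omega)) rfl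
      · right
        refine ⟨⟨z.2, ?_⟩, hv⟩
        exact Prod.ext (Fin.ext (by show (d:ℕ) = (z.1:ℕ); omega)) rfl
    · rintro (⟨⟨c, rfl⟩, hu⟩ | ⟨⟨c, rfl⟩, hv⟩)
      · refine ⟨Or.inl rfl, hu, ?_⟩
        intro he
        have := congrArg (fun w : V d => (w.1:ℕ)) he
        simp [v0] at this
        omega
      · refine ⟨Or.inr rfl, ?_, hv⟩
        intro he
        have := congrArg (fun w : V d => (w.1:ℕ)) he
        simp [u0] at this
        omega
  rw [hset, Set.ncard_coe_finset]
  have hinj0 : Function.Injective (fun c : C d => ((⟨0, by omega⟩ : Fin (d+1)), c)) := by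
    intro a b hab
    exact congrArg Prod.snd hab
  have hinjd : Function.Injective (fun c : C d => ((⟨d, by omega⟩ : Fin (d+1)), c)) := by
    intro a b hab
    exact congrArg Prod.snd hab
  have hu0m : u0 d ∈ univ.image (fun c : C d => ((⟨0, by omega⟩ : Fin (d+1)), c)) := by
    rw [Finset.mem_image]
    exact ⟨fun _ => false, Finset.mem_univ _, rfl⟩
  have hv0m : v0 d ∈ univ.image (fun c : C d => ((⟨d, by omega⟩ : Fin (d+1)), c)) := by
    rw [Finset.mem_image]
    exact ⟨fun _ => false, Finset.mem_univ _, rfl⟩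
  have hcardA : A.card = 2^d - 1 := by
    rw [hA, Finset.card_erase_of_mem hu0m, Finset.card_image_of_injective _ hinj0,
      Finset.card_univ, cardC]
  have hcardB : B.card = 2^d - 1 := by
    rw [hB, Finset.card_erase_of_mem hv0m, Finset.card_image_of_injective _ hinjd,
      Finset.card_univ, cardC]
  have hdisj : Disjoint A B := by
    rw [Finset.disjoint_left]
    intro z hzA hzB
    have h1 : (z.1:ℕ) = 0 := by
      have := Finset.mem_of_mem_erase (hA ▸ hzA)
      rw [Finset.mem_image] at this
      obtain ⟨c, -, rfl⟩ := this
      rfl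
    have h2 : (z.1:ℕ) = d := by
      have := Finset.mem_of_mem_erase (hB ▸ hzB)
      rw [Finset.mem_image] at this
      obtain ⟨c, -, rfl⟩ := this
      rfl
    omega
  rw [Finset.card_union_of_disjoint hdisj, hcardA, hcardB]
  have h1 : 1 ≤ 2^d := Nat.one_le_two_pow
  have h2 : 2^(d+1) = 2 * 2^d := by rw [pow_succ]; ring
  omega

end BFP
/-- `μ(BF(d)) = 2^{d+1} - 2` for all `d ≥ 2`. -/
theorem mu_BF (d : ℕ) (hd : 2 ≤ d) :
    mutualVisNum (BF d) = 2 ^ (d + 1) - 2 := by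
  have hmem : 2^(d+1) - 2 ∈ {n | ∃ X : Set (Fin (d+1) × (Fin d → Bool)),
      MutualVisSet (BF d) X ∧ X.ncard = n} :=
    ⟨BFP.X0 d, BFP.X0_mv hd, BFP.X0_ncard hd⟩
  have hub : ∀ n ∈ {n | ∃ X : Set (Fin (d+1) × (Fin d → Bool)),
      MutualVisSet (BF d) X ∧ X.ncard = n}, n ≤ 2^(d+1) - 2 := by
    rintro n ⟨X, hX, rfl⟩
    exact BFP.mv_ncard_le hd hX
  unfold mutualVisNum
  exact le_antisymm (csSup_le ⟨_, hmem⟩ hub) (le_csSup ⟨_, fun n hn => hub n hn⟩ hmem)
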